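/- Let F be an anonymous voting method satisfying a variable candidate universal axiom Ax. Then for any finite Y ⊆ 𝒳 and m ∈ ℤ⁺, the majoritarian projection F_{maj,Y} and the pairwise projection F_{pair,Y,m} satisfy Ax. -/

import Mathlib

/- Formalization of the profile representation of (weighted) weak tournaments from
Holliday, Norman, Pacuit, Zahedian, "Impossibility theorems involving weakenings of
expansion consistency and resoluteness in voting". Candidates form an infinite
type `C`. -/

open Classical

noncomputable section

/-- `L` is a strict linear order on exactly the finite set `s`. -/
def IsStrictLinearOrderOn {C : Type} (s : Finset C) (L : C → C → Prop) : Prop :=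
  (∀ x, ¬ L x x) ∧ (∀ x y z, L x y → L y z → L x z) ∧
    (∀ x ∈ s, ∀ y ∈ s, x ≠ y → L x y ∨ L y x) ∧ ∀ x y, L x y → x ∈ s ∧ y ∈ s

/-- Restriction of a relation to a finite set `A`. -/
def restrictRel {C : Type} (A : Finset C) (L : C → C → Prop) : C → C → Prop :=
  fun x y => L x y ∧ x ∈ A ∧ y ∈ A

theorem IsStrictLinearOrderOn.restrict {C : Type} {s A : Finset C} {L : C → C → Prop}
    (h : IsStrictLinearOrderOn s L) (hA : A ⊆ s) :
    IsStrictLinearOrderOn A (restrictRel A L) := by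
  obtain ⟨hirr, htr, htot, hdom⟩ := h
  refine ⟨fun x hx => hirr x hx.1,
    fun x y z hxy hyz => ⟨htr _ _ _ hxy.1 hyz.1, hxy.2.1, hyz.2.2⟩, ?_,
    fun x y hxy => ⟨hxy.2.1, hxy.2.2⟩⟩
  intro x hx y hy hne
  rcases htot x (hA hx) y (hA hy) hne with h' | h'
  · exact Or.inl ⟨h', hx, hy⟩
  · exact Or.inr ⟨h', hy, hx⟩

/-- The image of a relation under the transposition of `a` and `b`:
`(x, y) ∈ swapRel a b L` iff `(π x, π y) ∈ L` where `π` swaps `a` and `b`. -/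
def swapRel {C : Type} (a b : C) (L : C → C → Prop) : C → C → Prop :=
  fun x y => L (Equiv.swap a b x) (Equiv.swap a b y)

theorem IsStrictLinearOrderOn.swapRel_mem {C : Type} {s : Finset C} {L : C → C → Prop}
    (a b : C) (h : IsStrictLinearOrderOn s L) :
    IsStrictLinearOrderOn (s.image (Equiv.swap a b)) (swapRel a b L) := by
  obtain ⟨hirr, htr, htot, hdom⟩ := h
  refine ⟨fun x => hirr _, fun x y z hxy hyz => htr _ _ _ hxy hyz, ?_, ?_⟩
  · intro x hx y hy hne
    obtain ⟨x', hx', rfl⟩ := Finset.mem_image.mp hx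
    obtain ⟨y', hy', rfl⟩ := Finset.mem_image.mp hy
    have hne' : x' ≠ y' := by rintro rfl; exact hne rfl
    have := htot x' hx' y' hy' hne'
    simpa [swapRel, Equiv.swap_apply_self] using this
  · intro x y hxy
    obtain ⟨h1, h2⟩ := hdom _ _ hxy
    exact ⟨Finset.mem_image.mpr ⟨_, h1, Equiv.swap_apply_self a b x⟩,
      Finset.mem_image.mpr ⟨_, h2, Equiv.swap_apply_self a b y⟩⟩

theorem IsStrictLinearOrderOn.of_swapRel {C : Type} {s : Finset C} {L : C → C → Prop}
    {a b : C} (h : IsStrictLinearOrderOn s (swapRel a b L)) :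
    IsStrictLinearOrderOn (s.image (Equiv.swap a b)) L := by
  have h2 := h.swapRel_mem a b
  have heq : swapRel a b (swapRel a b L) = L := by
    funext x y
    simp [swapRel, Equiv.swap_apply_self]
  rwa [heq] at h2

/-- A generalized anonymous profile: an integer-valued function on the strict linear
orders of a finite nonempty set of candidates (encoded as a function on all
relations, supported on the strict linear orders of `cands`). -/
structure GAProfile (C : Type) where
  cands : Finset C
  cands_nonempty : cands.Nonempty
  count : (C → C → Prop) → ℤ
  count_supp : ∀ L, count L ≠ 0 → IsStrictLinearOrderOn cands L

namespace GAProfile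

variable {C : Type}

/-- `P` is an anonymous profile: all ballot counts are nonnegative. -/
def IsAnon (P : GAProfile C) : Prop := ∀ L, 0 ≤ P.count L

/-- The margin `μ_{x,y}(P)` of `x` over `y` in `P`. -/
def margin (P : GAProfile C) (x y : C) : ℤ :=
  (∑ᶠ L : C → C → Prop, if L x y then P.count L else 0) -
    ∑ᶠ L : C → C → Prop, if L y x then P.count L else 0

theorem margin_neg (P : GAProfile C) (x y : C) : P.margin y x = - P.margin x y := by
  simp only [margin]
  ring

/-- The restriction `P|_Z` of a generalized anonymous profile to a nonempty subset
`Z` of its candidates. -/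
def restrict (P : GAProfile C) (Z : Finset C) (hZ : Z.Nonempty) (hsub : Z ⊆ P.cands) :
    GAProfile C where
  cands := Z
  cands_nonempty := hZ
  count := fun L => ∑ᶠ L' : C → C → Prop, if restrictRel Z L' = L then P.count L' else 0
  count_supp := by
    intro L hL
    by_contra hnot
    apply hL
    apply finsum_eq_zero_of_forall_eq_zero
    intro L'
    split_ifs with h
    · by_contra hc
      exact hnot (h ▸ ((P.count_supp L' hc).restrict hsub))
    · rfl

/-- The profile `P_{a⇄b}` obtained by transposing the candidates `a` and `b`. -/
def swapCands (P : GAProfile C) (a b : C) : GAProfile C where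
  cands := P.cands.image (Equiv.swap a b)
  cands_nonempty := P.cands_nonempty.image _
  count := fun L => P.count (swapRel a b L)
  count_supp := fun L h => (P.count_supp _ h).of_swapRel

end GAProfile

/-- A weak tournament: an asymmetric directed graph on a finite nonempty set of
vertices. -/
structure WeakTournament (C : Type) where
  verts : Finset C
  verts_nonempty : verts.Nonempty
  edge : C → C → Prop
  edge_asymm : ∀ x y, edge x y → ¬ edge y x
  edge_dom : ∀ x y, edge x y → x ∈ verts ∧ y ∈ verts

/-- A weighted weak tournament: a weak tournament together with a positive integer
weight on each edge (normalized to weight `0` off the edges). -/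
structure WeightedWeakTournament (C : Type) where
  verts : Finset C
  verts_nonempty : verts.Nonempty
  edge : C → C → Prop
  edge_asymm : ∀ x y, edge x y → ¬ edge y x
  edge_dom : ∀ x y, edge x y → x ∈ verts ∧ y ∈ verts
  wt : C → C → ℤ
  wt_pos : ∀ x y, edge x y → 0 < wt x y
  wt_eq_zero : ∀ x y, ¬ edge x y → wt x y = 0

namespace GAProfile

variable {C : Type}

/-- The majority graph `M(P)` of a generalized anonymous profile. -/
def maj (P : GAProfile C) : WeakTournament C where
  verts := P.cands
  verts_nonempty := P.cands_nonempty
  edge := fun x y => 0 < P.margin x y ∧ x ∈ P.cands ∧ y ∈ P.cands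
  edge_asymm := by
    intro x y h h'
    have hneg := P.margin_neg x y
    have h1 := h.1
    have h2 := h'.1
    omega
  edge_dom := fun x y h => ⟨h.2.1, h.2.2⟩

/-- The margin graph `ℳ(P)` of a generalized anonymous profile. -/
def marg (P : GAProfile C) : WeightedWeakTournament C where
  verts := P.cands
  verts_nonempty := P.cands_nonempty
  edge := fun x y => 0 < P.margin x y ∧ x ∈ P.cands ∧ y ∈ P.cands
  edge_asymm := by
    intro x y h h'
    have hneg := P.margin_neg x y
    have h1 := h.1
    have h2 := h'.1
    omega
  edge_dom := fun x y h => ⟨h.2.1, h.2.2⟩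
  wt := fun x y =>
    if 0 < P.margin x y ∧ x ∈ P.cands ∧ y ∈ P.cands then P.margin x y else 0
  wt_pos := by
    intro x y h
    show 0 < if 0 < P.margin x y ∧ x ∈ P.cands ∧ y ∈ P.cands then P.margin x y else 0
    rw [if_pos h]
    exact h.1
  wt_eq_zero := by
    intro x y h
    show (if 0 < P.margin x y ∧ x ∈ P.cands ∧ y ∈ P.cands then P.margin x y else 0) = 0
    exact if_neg h

end GAProfile

/-- The number `ψ_Y = 2 (|Y| − 2)!`. -/
def psi {C : Type} (Y : Finset C) : ℤ := 2 * ((Y.card - 2).factorial : ℤ)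

theorem psi_pos {C : Type} (Y : Finset C) : 0 < psi Y := by
  have h := Nat.factorial_pos (Y.card - 2)
  simp only [psi]
  omega

/-- The count function of the profile `𝐋_Y` consisting of one copy of each linear
order of `Y`. -/
def allOrdersCount {C : Type} (Y : Finset C) (L : C → C → Prop) : ℤ :=
  if IsStrictLinearOrderOn Y L then 1 else 0

/-- `L` ranks `a` first and `b` second among the candidates in `Y`. -/
def firstSecond {C : Type} (Y : Finset C) (a b : C) (L : C → C → Prop) : Prop :=
  (∀ z ∈ Y, z ≠ a → L a z) ∧ ∀ z ∈ Y, z ≠ a → z ≠ b → L b z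

/-- The count function of the `ab`-`Y`-block `𝐋_{ab-Y}`: one copy of each linear
order of `Y` with `a` first and `b` second. -/
def blockCount {C : Type} (Y : Finset C) (a b : C) (L : C → C → Prop) : ℤ :=
  if IsStrictLinearOrderOn Y L ∧ firstSecond Y a b L then 1 else 0

/-- The count function of the profile
`𝔏_Y(T) = 𝐋_Y + Σ_{a→b in T} (𝐋_{ab-Y} − 𝐋_{ba-Y})`. -/
def bigLCount {C : Type} (Y : Finset C) (T : WeakTournament C) : (C → C → Prop) → ℤ :=
  fun L => allOrdersCount Y L +
    ∑ p ∈ T.verts ×ˢ T.verts,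
      (if T.edge p.1 p.2 then blockCount Y p.1 p.2 L - blockCount Y p.2 p.1 L else 0)

/-- The profile `𝔏_Y(T)`. -/
def bigL {C : Type} (Y : Finset C) (T : WeakTournament C) (hsub : T.verts ⊆ Y) :
    GAProfile C where
  cands := Y
  cands_nonempty := by
    obtain ⟨x, hx⟩ := T.verts_nonempty
    exact ⟨x, hsub hx⟩
  count := bigLCount Y T
  count_supp := by
    intro L hL
    by_contra h
    apply hL
    have hb : ∀ a b : C, blockCount Y a b L = 0 := by
      intro a b
      exact if_neg (by exact fun hc => h hc.1)
    simp only [bigLCount, allOrdersCount, if_neg h, zero_add]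
    refine Finset.sum_eq_zero fun p _ => ?_
    rw [hb, hb, sub_self]
    split <;> rfl

/-- The profile representation `𝔓_Y(T) = 𝔏_Y(T)|_{X(T)}` of a weak tournament `T`
relative to `Y`. -/
def profileRep {C : Type} (Y : Finset C) (T : WeakTournament C) (hsub : T.verts ⊆ Y) :
    GAProfile C :=
  (bigL Y T hsub).restrict T.verts T.verts_nonempty hsub

/-- The count function of the profile
`𝔏_{Y,m}(𝒯) = m𝐋_Y + Σ_{a→b in 𝒯 with weight kψ_Y} (k𝐋_{ab-Y} − k𝐋_{ba-Y})`. -/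
def bigLWCount {C : Type} (Y : Finset C) (m : ℕ) (T : WeightedWeakTournament C) :
    (C → C → Prop) → ℤ :=
  fun L => (m : ℤ) * allOrdersCount Y L +
    ∑ p ∈ T.verts ×ˢ T.verts,
      (if T.edge p.1 p.2 then
        (T.wt p.1 p.2 / psi Y) * (blockCount Y p.1 p.2 L - blockCount Y p.2 p.1 L)
      else 0)

/-- The profile `𝔏_{Y,m}(𝒯)`. -/
def bigLW {C : Type} (Y : Finset C) (m : ℕ) (T : WeightedWeakTournament C)
    (hsub : T.verts ⊆ Y) : GAProfile C where
  cands := Y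
  cands_nonempty := by
    obtain ⟨x, hx⟩ := T.verts_nonempty
    exact ⟨x, hsub hx⟩
  count := bigLWCount Y m T
  count_supp := by
    intro L hL
    by_contra h
    apply hL
    have hb : ∀ a b : C, blockCount Y a b L = 0 := by
      intro a b
      exact if_neg (by exact fun hc => h hc.1)
    simp only [bigLWCount, allOrdersCount, if_neg h, mul_zero, zero_add]
    refine Finset.sum_eq_zero fun p _ => ?_
    rw [hb, hb, sub_self, mul_zero]
    split <;> rfl

/-- The profile representation `𝔓_{Y,m}(𝒯) = 𝔏_{Y,m}(𝒯)|_{X(𝒯)}` of a weighted weak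
tournament `𝒯` relative to `Y` and `m`. -/
def profileRepW {C : Type} (Y : Finset C) (m : ℕ) (T : WeightedWeakTournament C)
    (hsub : T.verts ⊆ Y) : GAProfile C :=
  (bigLW Y m T hsub).restrict T.verts T.verts_nonempty hsub

/-- Membership in `𝕎𝕋^w_{Y,m}`: a weighted weak tournament on vertices included in
`Y`, each of whose weights is `kψ_Y` for some positive `k ≤ m`. -/
def MemWTw {C : Type} (Y : Finset C) (m : ℕ) (T : WeightedWeakTournament C) : Prop :=
  T.verts ⊆ Y ∧
    ∀ a b, T.edge a b → ∃ k : ℕ, 0 < k ∧ k ≤ m ∧ T.wt a b = (k : ℤ) * psi Y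

/-- The weighted weak tournament obtained by multiplying all weights by `n > 0`. -/
def WeightedWeakTournament.scale {C : Type} (n : ℤ) (hn : 0 < n)
    (T : WeightedWeakTournament C) : WeightedWeakTournament C where
  verts := T.verts
  verts_nonempty := T.verts_nonempty
  edge := T.edge
  edge_asymm := T.edge_asymm
  edge_dom := T.edge_dom
  wt := fun x y => n * T.wt x y
  wt_pos := fun x y h => mul_pos hn (T.wt_pos x y h)
  wt_eq_zero := fun x y h => by
    show n * T.wt x y = 0
    rw [T.wt_eq_zero x y h, mul_zero]

/-- An anonymous voting method: a function on a set of anonymous profiles assigning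
to each profile in its domain a nonempty set of winners among its candidates. -/
structure AnonVotingMethod (C : Type) where
  dom : Set (GAProfile C)
  dom_anon : ∀ P ∈ dom, P.IsAnon
  winners : GAProfile C → Finset C
  winners_nonempty : ∀ P ∈ dom, (winners P).Nonempty
  winners_sub : ∀ P ∈ dom, winners P ⊆ P.cands

namespace AnonVotingMethod

variable {C : Type}

/-- Majoritarianism: the winners depend only on the majority graph. -/
def Majoritarian (F : AnonVotingMethod C) : Prop :=
  ∀ P ∈ F.dom, ∀ P' ∈ F.dom, P.maj = P'.maj → F.winners P = F.winners P'

/-- Pairwiseness: the winners depend only on the margin graph. -/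
def Pairwise (F : AnonVotingMethod C) : Prop :=
  ∀ P ∈ F.dom, ∀ P' ∈ F.dom, P.marg = P'.marg → F.winners P = F.winners P'

/-- Neutrality: transposing two candidates transposes the winners accordingly. -/
def Neutral (F : AnonVotingMethod C) : Prop :=
  ∀ P ∈ F.dom, ∀ a b : C, P.swapCands a b ∈ F.dom →
    F.winners (P.swapCands a b) = (F.winners P).image (Equiv.swap a b)

end AnonVotingMethod

/-- The majoritarian projection `F_{maj,Y}` of an anonymous voting method `F`:
its domain consists of the anonymous profiles `P` with `X(P) ⊆ Y` and
`𝔓_Y(M(P)) ∈ dom(F)`, and `F_{maj,Y}(P) = F(𝔓_Y(M(P)))`. -/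
def majProj {C : Type} (F : AnonVotingMethod C) (Y : Finset C) : AnonVotingMethod C where
  dom := {P | P.IsAnon ∧ ∃ h : P.maj.verts ⊆ Y, profileRep Y P.maj h ∈ F.dom}
  dom_anon := fun _ hP => hP.1
  winners := fun P =>
    if h : P.maj.verts ⊆ Y then F.winners (profileRep Y P.maj h) else P.cands
  winners_nonempty := by
    rintro P ⟨hA, h, hd⟩
    show (if h : P.maj.verts ⊆ Y then
      F.winners (profileRep Y P.maj h) else P.cands).Nonempty
    rw [dif_pos h]
    exact F.winners_nonempty _ hd
  winners_sub := by
    rintro P ⟨hA, h, hd⟩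
    show (if h : P.maj.verts ⊆ Y then
      F.winners (profileRep Y P.maj h) else P.cands) ⊆ P.cands
    rw [dif_pos h]
    exact F.winners_sub _ hd

/-- The pairwise projection `F_{pair,Y,m}` of an anonymous voting method `F`:
its domain consists of the anonymous profiles `P` with `X(P) ⊆ Y`, all weights in
`ℳ(P)` at most `m`, and `𝔓_{Y,m}(ψℳ(P)) ∈ dom(F)`, and
`F_{pair,Y,m}(P) = F(𝔓_{Y,m}(ψℳ(P)))`. -/
def pairProj {C : Type} (F : AnonVotingMethod C) (Y : Finset C) (m : ℕ) :
    AnonVotingMethod C where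
  dom := {P | P.IsAnon ∧ (∀ x ∈ P.cands, ∀ y ∈ P.cands, P.margin x y ≤ (m : ℤ)) ∧
    ∃ h : (WeightedWeakTournament.scale (psi Y) (psi_pos Y) P.marg).verts ⊆ Y,
      profileRepW Y m (WeightedWeakTournament.scale (psi Y) (psi_pos Y) P.marg) h ∈ F.dom}
  dom_anon := fun _ hP => hP.1
  winners := fun P =>
    if h : (WeightedWeakTournament.scale (psi Y) (psi_pos Y) P.marg).verts ⊆ Y then
      F.winners
        (profileRepW Y m (WeightedWeakTournament.scale (psi Y) (psi_pos Y) P.marg) h)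
    else P.cands
  winners_nonempty := by
    rintro P ⟨hA, hw, h, hd⟩
    show (if h : (WeightedWeakTournament.scale (psi Y) (psi_pos Y) P.marg).verts ⊆ Y then
      F.winners
        (profileRepW Y m (WeightedWeakTournament.scale (psi Y) (psi_pos Y) P.marg) h)
      else P.cands).Nonempty
    rw [dif_pos h]
    exact F.winners_nonempty _ hd
  winners_sub := by
    rintro P ⟨hA, hw, h, hd⟩
    show (if h : (WeightedWeakTournament.scale (psi Y) (psi_pos Y) P.marg).verts ⊆ Y then
      F.winners
        (profileRepW Y m (WeightedWeakTournament.scale (psi Y) (psi_pos Y) P.marg) h)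
      else P.cands) ⊆ P.cands
    rw [dif_pos h]
    exact F.winners_sub _ hd

/-- `F` satisfies the `n`-ary universal axiom `Ax`: every `n`-tuple of pairs
`⟨P, F(P)⟩` with `P` in the domain of `F` belongs to `Ax`. -/
def AnonVotingMethod.Satisfies {C : Type} (F : AnonVotingMethod C) {n : ℕ}
    (Ax : Set (Fin n → GAProfile C × Finset C)) : Prop :=
  ∀ f : Fin n → GAProfile C × Finset C,
    (∀ i, (f i).1 ∈ F.dom ∧ (f i).2 = F.winners (f i).1) → f ∈ Ax

/-- `Ax` is a majoritarian universal axiom: membership is invariant under replacing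
the profiles by profiles with the same majority graphs. -/
def IsMajoritarianAx {C : Type} {n : ℕ} (Ax : Set (Fin n → GAProfile C × Finset C)) :
    Prop :=
  ∀ Pv Qv : Fin n → GAProfile C, (∀ i, (Pv i).maj = (Qv i).maj) →
    ∀ Xv : Fin n → Finset C, (∀ i, Xv i ⊆ (Pv i).cands) →
      ((fun i => (Pv i, Xv i)) ∈ Ax ↔ (fun i => (Qv i, Xv i)) ∈ Ax)

/-- `Ax` is a homogeneously pairwise universal axiom: membership is invariant under
replacing the profiles by profiles whose margin graphs are a common positive multiple
of the original margin graphs. -/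
def IsHomogeneouslyPairwiseAx {C : Type} {n : ℕ}
    (Ax : Set (Fin n → GAProfile C × Finset C)) : Prop :=
  ∀ Pv Qv : Fin n → GAProfile C, ∀ k : ℤ, ∀ hk : 0 < k,
    (∀ i, WeightedWeakTournament.scale k hk (Pv i).marg = (Qv i).marg) →
    ∀ Xv : Fin n → Finset C, (∀ i, Xv i ⊆ (Pv i).cands) →
      ((fun i => (Pv i, Xv i)) ∈ Ax ↔ (fun i => (Qv i, Xv i)) ∈ Ax)

/-- `Ax` is a variable candidate universal axiom: if the `Qᵢ` have the same candidate
sets as the `Pᵢ` and are related by restriction in all the ways the `Pᵢ` are, then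
acceptable choices for the `Qᵢ` are acceptable choices for the `Pᵢ`. -/
def IsVariableCandidateAx {C : Type} {n : ℕ}
    (Ax : Set (Fin n → GAProfile C × Finset C)) : Prop :=
  ∀ Pv Qv : Fin n → GAProfile C,
    (∀ i, (Pv i).cands = (Qv i).cands) →
    (∀ i j, ∀ h1 : (Pv i).cands ⊆ (Pv j).cands,
      Pv i = (Pv j).restrict (Pv i).cands (Pv i).cands_nonempty h1 →
      ∀ h2 : (Qv i).cands ⊆ (Qv j).cands,
        Qv i = (Qv j).restrict (Qv i).cands (Qv i).cands_nonempty h2) →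
    ∀ Xv : Fin n → Finset C, (∀ i, Xv i ⊆ (Pv i).cands) →
      (fun i => (Qv i, Xv i)) ∈ Ax → (fun i => (Pv i, Xv i)) ∈ Ax


/-! ### Auxiliary lemmas for Statement 19 -/

section Aux19

variable {C : Type}

lemma GAProfile.ext' {P Q : GAProfile C} (h1 : P.cands = Q.cands)
    (h2 : P.count = Q.count) : P = Q := by
  cases P; cases Q
  cases h1; cases h2
  rfl

lemma slo_finite (W : Finset C) :
    {L : C → C → Prop | IsStrictLinearOrderOn W L}.Finite := by
  have hinj : Set.InjOn (fun (L : C → C → Prop) => fun (a b : {x // x ∈ W}) => L a b)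
      {L | IsStrictLinearOrderOn W L} := by
    intro L hL L' hL' h
    funext x y
    by_cases hx : x ∈ W ∧ y ∈ W
    · exact congrFun (congrFun h ⟨x, hx.1⟩) ⟨y, hx.2⟩
    · apply propext
      constructor
      · intro hl; exact absurd (hL.2.2.2 x y hl) hx
      · intro hl; exact absurd (hL'.2.2.2 x y hl) hx
  exact Set.Finite.of_finite_image (Set.toFinite _) hinj

/-- The finite set of strict linear orders on `W`. -/
def sloSet (W : Finset C) : Finset (C → C → Prop) := (slo_finite W).toFinset

lemma mem_sloSet {W : Finset C} {L : C → C → Prop} :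
    L ∈ sloSet W ↔ IsStrictLinearOrderOn W L := (slo_finite W).mem_toFinset

lemma GAProfile.restrict_count (P : GAProfile C) (Z : Finset C) (hZ : Z.Nonempty)
    (hsub : Z ⊆ P.cands) (L : C → C → Prop) :
    (P.restrict Z hZ hsub).count L
      = ∑ L' ∈ sloSet P.cands, if restrictRel Z L' = L then P.count L' else 0 := by
  show (∑ᶠ L' : C → C → Prop, if restrictRel Z L' = L then P.count L' else 0) = _
  apply finsum_eq_finset_sum_of_support_subset
  intro L' hL'
  simp only [Function.mem_support, ne_eq] at hL'
  have hc : P.count L' ≠ 0 := fun h => hL' (by simp [h])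
  simpa [Finset.mem_coe, mem_sloSet] using P.count_supp L' hc

lemma restrictRel_restrictRel {W₁ W₂ : Finset C} (h : W₂ ⊆ W₁) (L : C → C → Prop) :
    restrictRel W₂ (restrictRel W₁ L) = restrictRel W₂ L := by
  funext x y
  apply propext
  constructor
  · rintro ⟨⟨hL, _, _⟩, hx, hy⟩; exact ⟨hL, hx, hy⟩
  · rintro ⟨hL, hx, hy⟩; exact ⟨⟨hL, h hx, h hy⟩, hx, hy⟩

lemma GAProfile.restrict_restrict (P : GAProfile C) (W₁ W₂ : Finset C)
    (h₁ : W₁.Nonempty) (h₂ : W₂.Nonempty) (s₁ : W₁ ⊆ P.cands) (s₂ : W₂ ⊆ W₁) :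
    (P.restrict W₁ h₁ s₁).restrict W₂ h₂ s₂ = P.restrict W₂ h₂ (s₂.trans s₁) := by
  apply GAProfile.ext'
  · rfl
  funext L
  refine (GAProfile.restrict_count (P.restrict W₁ h₁ s₁) W₂ h₂ s₂ L).trans ?_
  simp only [GAProfile.restrict_count]
  have hc : (P.restrict W₁ h₁ s₁).cands = W₁ := rfl
  rw [hc]
  have hpush : ∀ L'' : C → C → Prop,
      (if restrictRel W₂ L'' = L then
          (∑ L' ∈ sloSet P.cands, if restrictRel W₁ L' = L'' then P.count L' else 0) else 0)
        = ∑ L' ∈ sloSet P.cands,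
            if restrictRel W₁ L' = L'' ∧ restrictRel W₂ L'' = L then P.count L' else 0 := by
    intro L''
    by_cases hc' : restrictRel W₂ L'' = L <;> simp [hc']
  rw [Finset.sum_congr rfl fun L'' _ => hpush L'', Finset.sum_comm]
  refine Finset.sum_congr rfl fun L' hL' => ?_
  have hslo := mem_sloSet.mp hL'
  have hmem : restrictRel W₁ L' ∈ sloSet W₁ := mem_sloSet.mpr (hslo.restrict s₁)
  calc ∑ L'' ∈ sloSet W₁,
        (if restrictRel W₁ L' = L'' ∧ restrictRel W₂ L'' = L then P.count L' else 0)
      = ∑ L'' ∈ sloSet W₁, (if restrictRel W₁ L' = L'' then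
          (if restrictRel W₂ L'' = L then P.count L' else 0) else 0) := by
        refine Finset.sum_congr rfl fun L'' _ => ?_
        rw [ite_and]
    _ = if restrictRel W₂ L' = L then P.count L' else 0 := by
        rw [Finset.sum_ite_eq, if_pos hmem, restrictRel_restrictRel s₂]

lemma GAProfile.margin_eq_sum (P : GAProfile C) (x y : C) :
    P.margin x y = (∑ L ∈ sloSet P.cands, if L x y then P.count L else 0)
      - ∑ L ∈ sloSet P.cands, if L y x then P.count L else 0 := by
  unfold GAProfile.margin
  congr 1 <;>
  · apply finsum_eq_finset_sum_of_support_subset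
    intro L hL
    simp only [Function.mem_support, ne_eq] at hL
    have hc : P.count L ≠ 0 := fun h => hL (by simp [h])
    simpa [Finset.mem_coe, mem_sloSet] using P.count_supp L hc

lemma GAProfile.margin_restrict (P : GAProfile C) (Z : Finset C) (hZ : Z.Nonempty)
    (hsub : Z ⊆ P.cands) {x y : C} (hx : x ∈ Z) (hy : y ∈ Z) :
    (P.restrict Z hZ hsub).margin x y = P.margin x y := by
  have key : ∀ u v : C, u ∈ Z → v ∈ Z →
      (∑ L ∈ sloSet Z, if L u v then (P.restrict Z hZ hsub).count L else 0)
        = ∑ L' ∈ sloSet P.cands, if L' u v then P.count L' else 0 := by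
    intro u v hu hv
    simp only [GAProfile.restrict_count]
    have h1 : ∀ L : C → C → Prop,
        (if L u v then
            (∑ L' ∈ sloSet P.cands, if restrictRel Z L' = L then P.count L' else 0) else 0)
          = ∑ L' ∈ sloSet P.cands,
              if restrictRel Z L' = L then (if L u v then P.count L' else 0) else 0 := by
      intro L
      by_cases hc : L u v <;> simp [hc]
    rw [Finset.sum_congr rfl fun L _ => h1 L, Finset.sum_comm]
    refine Finset.sum_congr rfl fun L' hL' => ?_
    have hslo := mem_sloSet.mp hL'
    have hmem : restrictRel Z L' ∈ sloSet Z := mem_sloSet.mpr (hslo.restrict hsub)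
    rw [Finset.sum_ite_eq, if_pos hmem]
    exact if_congr ⟨fun h => h.1, fun h => ⟨h, hu, hv⟩⟩ rfl rfl
  have hc : (P.restrict Z hZ hsub).cands = Z := rfl
  rw [GAProfile.margin_eq_sum, GAProfile.margin_eq_sum, hc, key x y hx hy, key y x hy hx]

lemma swap_image_self {Y : Finset C} {a b : C} (ha : a ∈ Y) (hb : b ∈ Y) :
    Y.image (Equiv.swap a b) = Y := by
  apply Finset.Subset.antisymm
  · intro x hx
    obtain ⟨y, hy, rfl⟩ := Finset.mem_image.mp hx
    rcases eq_or_ne y a with rfl | hya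
    · simpa [Equiv.swap_apply_left] using hb
    rcases eq_or_ne y b with rfl | hyb
    · simpa [Equiv.swap_apply_right] using ha
    · rwa [Equiv.swap_apply_of_ne_of_ne hya hyb]
  · intro x hx
    refine Finset.mem_image.mpr ⟨Equiv.swap a b x, ?_, Equiv.swap_apply_self a b x⟩
    rcases eq_or_ne x a with rfl | hxa
    · simpa [Equiv.swap_apply_left] using hb
    rcases eq_or_ne x b with rfl | hxb
    · simpa [Equiv.swap_apply_right] using ha
    · rwa [Equiv.swap_apply_of_ne_of_ne hxa hxb]

lemma slo_swap_iff {Y : Finset C} {a b : C} (ha : a ∈ Y) (hb : b ∈ Y) (L : C → C → Prop) :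
    IsStrictLinearOrderOn Y (swapRel a b L) ↔ IsStrictLinearOrderOn Y L := by
  constructor
  · intro h
    have h' := h.of_swapRel
    rwa [swap_image_self ha hb] at h'
  · intro h
    have h' := h.swapRel_mem a b
    rwa [swap_image_self ha hb] at h'

lemma swapRel_comm (a b : C) (L : C → C → Prop) : swapRel a b L = swapRel b a L := by
  funext x y; simp [swapRel, Equiv.swap_comm]

lemma swapRel_invol (a b : C) (L : C → C → Prop) : swapRel a b (swapRel a b L) = L := by
  funext x y; simp [swapRel, Equiv.swap_apply_self]

lemma firstSecond_swap {Y : Finset C} {a b : C} (ha : a ∈ Y) (hb : b ∈ Y)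
    (L : C → C → Prop) :
    firstSecond Y a b (swapRel a b L) ↔ firstSecond Y b a L := by
  rcases eq_or_ne a b with rfl | hab
  · have h : swapRel a a L = L := by
      funext x y; simp [swapRel, Equiv.swap_self]
    rw [h]
  constructor
  · rintro ⟨h1, h2⟩
    constructor
    · intro z hz hzb
      rcases eq_or_ne z a with rfl | hza
      · have h := h1 b hb (Ne.symm hab)
        simpa [swapRel, Equiv.swap_apply_left, Equiv.swap_apply_right] using h
      · have h := h1 z hz hza
        simpa [swapRel, Equiv.swap_apply_left,
          Equiv.swap_apply_of_ne_of_ne hza hzb] using h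
    · intro z hz hzb hza
      have h := h2 z hz hza hzb
      simpa [swapRel, Equiv.swap_apply_right,
        Equiv.swap_apply_of_ne_of_ne hza hzb] using h
  · rintro ⟨k1, k2⟩
    constructor
    · intro z hz hza
      rcases eq_or_ne z b with rfl | hzb
      · have h := k1 a ha hab
        simpa [swapRel, Equiv.swap_apply_left, Equiv.swap_apply_right] using h
      · have h := k1 z hz hzb
        simpa [swapRel, Equiv.swap_apply_left,
          Equiv.swap_apply_of_ne_of_ne hza hzb] using h
    · intro z hz hza hzb
      have h := k2 z hz hzb hza
      simpa [swapRel, Equiv.swap_apply_right,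
        Equiv.swap_apply_of_ne_of_ne hza hzb] using h

lemma blockCount_swap {Y : Finset C} {a b : C} (ha : a ∈ Y) (hb : b ∈ Y)
    (L : C → C → Prop) :
    blockCount Y a b (swapRel a b L) = blockCount Y b a L := by
  unfold blockCount
  exact if_congr (and_congr (slo_swap_iff ha hb L) (firstSecond_swap ha hb L)) rfl rfl

lemma restrictRel_swap {Y Z : Finset C} {a b : C} {L : C → C → Prop}
    (hZY : Z ⊆ Y) (hab : a ≠ b) (hnot : a ∉ Z ∨ b ∉ Z)
    (hSLO : IsStrictLinearOrderOn Y L) (hfs : firstSecond Y a b L) :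
    restrictRel Z (swapRel a b L) = restrictRel Z L := by
  obtain ⟨hirr, htr, _, _⟩ := hSLO
  obtain ⟨h1, h2⟩ := hfs
  have asymm : ∀ u v, L u v → ¬ L v u := fun u v h h' => hirr u (htr u v u h h')
  have key : ∀ x ∈ Z, ∀ y ∈ Z, (L (Equiv.swap a b x) (Equiv.swap a b y) ↔ L x y) := by
    intro x hx y hy
    rcases eq_or_ne x a with rfl | hxa
    · have hbZ : b ∉ Z := by
        rcases hnot with h | h
        · exact absurd hx h
        · exact h
      rcases eq_or_ne y x with rfl | hya
      · rw [Equiv.swap_apply_left]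
        exact iff_of_false (hirr b) (hirr y)
      · have hyb : y ≠ b := fun h => hbZ (h ▸ hy)
        rw [Equiv.swap_apply_left, Equiv.swap_apply_of_ne_of_ne hya hyb]
        exact iff_of_true (h2 y (hZY hy) hya hyb) (h1 y (hZY hy) hya)
    rcases eq_or_ne x b with rfl | hxb
    · have haZ : a ∉ Z := by
        rcases hnot with h | h
        · exact h
        · exact absurd hx h
      rcases eq_or_ne y x with rfl | hyb
      · rw [Equiv.swap_apply_right]
        exact iff_of_false (hirr a) (hirr y)
      · have hya : y ≠ a := fun h => haZ (h ▸ hy)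
        rw [Equiv.swap_apply_right, Equiv.swap_apply_of_ne_of_ne hya hyb]
        exact iff_of_true (h1 y (hZY hy) hya) (h2 y (hZY hy) hya hyb)
    · rcases eq_or_ne y a with rfl | hya
      · rw [Equiv.swap_apply_left, Equiv.swap_apply_of_ne_of_ne hxa hxb]
        exact iff_of_false (asymm b x (h2 x (hZY hx) hxa hxb))
          (asymm y x (h1 x (hZY hx) hxa))
      rcases eq_or_ne y b with rfl | hyb
      · rw [Equiv.swap_apply_right, Equiv.swap_apply_of_ne_of_ne hxa hxb]
        exact iff_of_false (asymm a x (h1 x (hZY hx) hxa))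
          (asymm y x (h2 x (hZY hx) hxa hxb))
      · rw [Equiv.swap_apply_of_ne_of_ne hxa hxb, Equiv.swap_apply_of_ne_of_ne hya hyb]
  funext x y
  apply propext
  constructor
  · rintro ⟨hL, hx, hy⟩; exact ⟨(key x hx y hy).mp hL, hx, hy⟩
  · rintro ⟨hL, hx, hy⟩; exact ⟨(key x hx y hy).mpr hL, hx, hy⟩

lemma blockDiff_sum_zero {Y Z : Finset C} (hZY : Z ⊆ Y) {a b : C}
    (ha : a ∈ Y) (hb : b ∈ Y) (hab : a ≠ b) (hnot : a ∉ Z ∨ b ∉ Z) (L : C → C → Prop) :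
    ∑ L' ∈ sloSet Y, (if restrictRel Z L' = L then
        (blockCount Y a b L' - blockCount Y b a L') else 0) = 0 := by
  set g : (C → C → Prop) → ℤ := fun L' =>
    if restrictRel Z L' = L then blockCount Y a b L' - blockCount Y b a L' else 0 with hg
  have hswap : ∀ L', g (swapRel a b L') = - g L' := by
    intro L'
    have hba : blockCount Y a b (swapRel a b L') = blockCount Y b a L' :=
      blockCount_swap ha hb L'
    have hab2 : blockCount Y b a (swapRel a b L') = blockCount Y a b L' := by
      rw [swapRel_comm]; exact blockCount_swap hb ha L'
    by_cases h1 : IsStrictLinearOrderOn Y L' ∧ firstSecond Y a b L'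
    · have hres : restrictRel Z (swapRel a b L') = restrictRel Z L' :=
        restrictRel_swap hZY hab hnot h1.1 h1.2
      simp only [hg, hres, hba, hab2]
      by_cases hcond : restrictRel Z L' = L <;> simp [hcond] <;> ring
    · by_cases h2 : IsStrictLinearOrderOn Y L' ∧ firstSecond Y b a L'
      · have hres : restrictRel Z (swapRel b a L') = restrictRel Z L' :=
          restrictRel_swap hZY hab.symm hnot.symm h2.1 h2.2
        rw [swapRel_comm b a] at hres
        simp only [hg, hres, hba, hab2]
        by_cases hcond : restrictRel Z L' = L <;> simp [hcond] <;> ring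
      · have z1 : blockCount Y a b L' = 0 := if_neg h1
        have z2 : blockCount Y b a L' = 0 := if_neg h2
        simp only [hg, hba, hab2, z1, z2, sub_self, sub_zero, zero_sub]
        simp
  have himg : ∀ L' ∈ sloSet Y, swapRel a b L' ∈ sloSet Y := by
    intro L' hL'
    exact mem_sloSet.mpr ((slo_swap_iff ha hb L').mpr (mem_sloSet.mp hL'))
  have hneg : ∑ L' ∈ sloSet Y, g L' = ∑ L' ∈ sloSet Y, - g L' := by
    refine Finset.sum_nbij' (swapRel a b) (swapRel a b) himg himg
      (fun L' _ => swapRel_invol a b L') (fun L' _ => swapRel_invol a b L') ?_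
    intro L' _
    rw [hswap, neg_neg]
  rw [Finset.sum_neg_distrib] at hneg
  linarith

lemma sum_pairs_eq (Z V : Finset C) (hZV : Z ⊆ V)
    (e e' : C × C → Prop) (t t' : C × C → ℤ)
    (he' : ∀ p : C × C, p.1 ∈ Z → p.2 ∈ Z → (e' p ↔ e p))
    (ht : ∀ p : C × C, p.1 ∈ Z → p.2 ∈ Z → e p → t' p = t p)
    (h0 : ∀ p : C × C, e p → ¬(p.1 ∈ Z ∧ p.2 ∈ Z) → t p = 0) :
    ∑ p ∈ Z ×ˢ Z, (if e' p then t' p else 0)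
      = ∑ p ∈ V ×ˢ V, (if e p then t p else 0) := by
  have step1 : ∑ p ∈ Z ×ˢ Z, (if e' p then t' p else 0)
      = ∑ p ∈ Z ×ˢ Z, (if e p then t p else 0) := by
    refine Finset.sum_congr rfl fun p hp => ?_
    obtain ⟨hp1, hp2⟩ := Finset.mem_product.mp hp
    by_cases he : e p
    · rw [if_pos ((he' _ hp1 hp2).mpr he), if_pos he, ht _ hp1 hp2 he]
    · rw [if_neg (fun hc => he ((he' _ hp1 hp2).mp hc)), if_neg he]
  rw [step1]
  apply Finset.sum_subset (Finset.product_subset_product hZV hZV)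
  intro p hp hnp
  by_cases he : e p
  · rw [if_pos he, h0 _ he (fun hc => hnp (Finset.mem_product.mpr hc))]
  · exact if_neg he

lemma sum_ite_swap_pairs (S : Finset (C → C → Prop)) (V : Finset C)
    (c : (C → C → Prop) → Prop) (e : C × C → Prop)
    (t : C × C → (C → C → Prop) → ℤ) :
    ∑ L' ∈ S, (if c L' then
        ∑ p ∈ V ×ˢ V, (if e p then t p L' else 0) else 0)
      = ∑ p ∈ V ×ˢ V, (if e p then
          ∑ L' ∈ S, (if c L' then t p L' else 0) else 0) := by
  have h1 : ∀ L', (if c L' then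
        ∑ p ∈ V ×ˢ V, (if e p then t p L' else 0) else 0)
      = ∑ p ∈ V ×ˢ V, (if c L' then (if e p then t p L' else 0) else 0) := by
    intro L'; by_cases hc : c L' <;> simp [hc]
  rw [Finset.sum_congr rfl fun L' _ => h1 L', Finset.sum_comm]
  refine Finset.sum_congr rfl fun p _ => ?_
  by_cases he : e p <;> simp [he]

lemma bigL_restrict_eq (Y : Finset C) (T T' : WeakTournament C)
    (hsub : T.verts ⊆ Y) (hZ : T'.verts ⊆ T.verts)
    (hedge : ∀ x y, x ∈ T'.verts → y ∈ T'.verts → (T'.edge x y ↔ T.edge x y)) :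
    (bigL Y T' (hZ.trans hsub)).restrict T'.verts T'.verts_nonempty (hZ.trans hsub)
      = (bigL Y T hsub).restrict T'.verts T'.verts_nonempty (hZ.trans hsub) := by
  apply GAProfile.ext'
  · rfl
  funext L
  rw [GAProfile.restrict_count, GAProfile.restrict_count]
  show (∑ L' ∈ sloSet Y, if restrictRel T'.verts L' = L then bigLCount Y T' L' else 0)
      = ∑ L' ∈ sloSet Y, if restrictRel T'.verts L' = L then bigLCount Y T L' else 0
  simp only [bigLCount]
  have hsplit : ∀ (cnd : Prop) (x y : ℤ),
      (if cnd then x + y else 0) = (if cnd then x else 0) + (if cnd then y else 0) := by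
    intro cnd x y; by_cases hc : cnd <;> simp [hc]
  rw [Finset.sum_congr rfl fun L' _ => hsplit _ _ _,
    Finset.sum_congr rfl fun L' _ => hsplit _ _ _,
    Finset.sum_add_distrib, Finset.sum_add_distrib]
  congr 1
  rw [sum_ite_swap_pairs (sloSet Y) T'.verts (fun L' => restrictRel T'.verts L' = L)
      (fun p => T'.edge p.1 p.2)
      (fun p L' => blockCount Y p.1 p.2 L' - blockCount Y p.2 p.1 L'),
    sum_ite_swap_pairs (sloSet Y) T.verts (fun L' => restrictRel T'.verts L' = L)
      (fun p => T.edge p.1 p.2)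
      (fun p L' => blockCount Y p.1 p.2 L' - blockCount Y p.2 p.1 L')]
  refine sum_pairs_eq T'.verts T.verts hZ (fun p => T.edge p.1 p.2)
    (fun p => T'.edge p.1 p.2) _ _ (fun p h1 h2 => hedge p.1 p.2 h1 h2)
    (fun p _ _ _ => rfl) ?_
  intro p he hn
  have hd := T.edge_dom p.1 p.2 he
  have hne : p.1 ≠ p.2 := fun h => T.edge_asymm p.1 p.2 he (h ▸ he)
  exact blockDiff_sum_zero (hZ.trans hsub) (hsub hd.1) (hsub hd.2) hne
    (not_and_or.mp hn) L

lemma bigLW_restrict_eq (Y : Finset C) (m : ℕ) (T T' : WeightedWeakTournament C)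
    (hsub : T.verts ⊆ Y) (hZ : T'.verts ⊆ T.verts)
    (hedge : ∀ x y, x ∈ T'.verts → y ∈ T'.verts → (T'.edge x y ↔ T.edge x y))
    (hwt : ∀ x y, x ∈ T'.verts → y ∈ T'.verts → T.edge x y → T'.wt x y = T.wt x y) :
    (bigLW Y m T' (hZ.trans hsub)).restrict T'.verts T'.verts_nonempty (hZ.trans hsub)
      = (bigLW Y m T hsub).restrict T'.verts T'.verts_nonempty (hZ.trans hsub) := by
  apply GAProfile.ext'
  · rfl
  funext L
  rw [GAProfile.restrict_count, GAProfile.restrict_count]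
  show (∑ L' ∈ sloSet Y, if restrictRel T'.verts L' = L then bigLWCount Y m T' L' else 0)
      = ∑ L' ∈ sloSet Y, if restrictRel T'.verts L' = L then bigLWCount Y m T L' else 0
  simp only [bigLWCount]
  have hsplit : ∀ (cnd : Prop) (x y : ℤ),
      (if cnd then x + y else 0) = (if cnd then x else 0) + (if cnd then y else 0) := by
    intro cnd x y; by_cases hc : cnd <;> simp [hc]
  rw [Finset.sum_congr rfl fun L' _ => hsplit _ _ _,
    Finset.sum_congr rfl fun L' _ => hsplit _ _ _,
    Finset.sum_add_distrib, Finset.sum_add_distrib]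
  congr 1
  rw [sum_ite_swap_pairs (sloSet Y) T'.verts (fun L' => restrictRel T'.verts L' = L)
      (fun p => T'.edge p.1 p.2)
      (fun p L' => T'.wt p.1 p.2 / psi Y *
        (blockCount Y p.1 p.2 L' - blockCount Y p.2 p.1 L')),
    sum_ite_swap_pairs (sloSet Y) T.verts (fun L' => restrictRel T'.verts L' = L)
      (fun p => T.edge p.1 p.2)
      (fun p L' => T.wt p.1 p.2 / psi Y *
        (blockCount Y p.1 p.2 L' - blockCount Y p.2 p.1 L'))]
  have pull : ∀ (k : ℤ) (a b : C),
      (∑ L' ∈ sloSet Y, if restrictRel T'.verts L' = L then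
          k * (blockCount Y a b L' - blockCount Y b a L') else 0)
        = k * ∑ L' ∈ sloSet Y, (if restrictRel T'.verts L' = L then
            (blockCount Y a b L' - blockCount Y b a L') else 0) := by
    intro k a b
    rw [Finset.mul_sum]
    refine Finset.sum_congr rfl fun L' _ => ?_
    by_cases hc : restrictRel T'.verts L' = L <;> simp [hc]
  refine sum_pairs_eq T'.verts T.verts hZ (fun p => T.edge p.1 p.2)
    (fun p => T'.edge p.1 p.2) _ _ (fun p h1 h2 => hedge p.1 p.2 h1 h2) ?_ ?_
  · intro p hx hy he
    rw [hwt p.1 p.2 hx hy he]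
  · intro p he hn
    have hd := T.edge_dom p.1 p.2 he
    have hne : p.1 ≠ p.2 := fun h => T.edge_asymm p.1 p.2 he (h ▸ he)
    rw [pull]
    rw [blockDiff_sum_zero (hZ.trans hsub) (hsub hd.1) (hsub hd.2) hne
      (not_and_or.mp hn) L, mul_zero]

lemma profileRep_maj_restrict (Y : Finset C) (P Q : GAProfile C)
    (hsub : P.cands ⊆ Q.cands) (hPQ : P = Q.restrict P.cands P.cands_nonempty hsub)
    (h1 : P.maj.verts ⊆ Y) (h2 : Q.maj.verts ⊆ Y)
    (hne : P.maj.verts.Nonempty) (hsub2 : P.maj.verts ⊆ Q.maj.verts) :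
    profileRep Y P.maj h1 = (profileRep Y Q.maj h2).restrict P.maj.verts hne hsub2 := by
  have hmarg : ∀ x y, x ∈ P.cands → y ∈ P.cands → P.margin x y = Q.margin x y := by
    intro x y hx hy
    conv_lhs => rw [hPQ]
    exact GAProfile.margin_restrict Q P.cands P.cands_nonempty hsub hx hy
  have hedge : ∀ x y, x ∈ P.maj.verts → y ∈ P.maj.verts →
      (P.maj.edge x y ↔ Q.maj.edge x y) := by
    intro x y hx hy
    show (0 < P.margin x y ∧ x ∈ P.cands ∧ y ∈ P.cands)
      ↔ (0 < Q.margin x y ∧ x ∈ Q.cands ∧ y ∈ Q.cands)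
    constructor
    · rintro ⟨hmpos, hx', hy'⟩
      exact ⟨(hmarg x y hx' hy') ▸ hmpos, hsub hx', hsub hy'⟩
    · rintro ⟨hmpos, _, _⟩
      refine ⟨?_, hx, hy⟩
      rw [hmarg x y hx hy]
      exact hmpos
  have hkey := bigL_restrict_eq Y Q.maj P.maj h2 hsub2 hedge
  show (bigL Y P.maj h1).restrict P.maj.verts P.maj.verts_nonempty h1
      = ((bigL Y Q.maj h2).restrict Q.maj.verts Q.maj.verts_nonempty h2).restrict
          P.maj.verts hne hsub2
  refine Eq.trans ?_ (GAProfile.restrict_restrict _ _ _ _ _ _ _).symm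
  exact hkey

lemma profileRep_pair_restrict (Y : Finset C) (m : ℕ) (P Q : GAProfile C)
    (hsub : P.cands ⊆ Q.cands) (hPQ : P = Q.restrict P.cands P.cands_nonempty hsub)
    (h1 : (WeightedWeakTournament.scale (psi Y) (psi_pos Y) P.marg).verts ⊆ Y)
    (h2 : (WeightedWeakTournament.scale (psi Y) (psi_pos Y) Q.marg).verts ⊆ Y)
    (hne : (WeightedWeakTournament.scale (psi Y) (psi_pos Y) P.marg).verts.Nonempty)
    (hsub2 : (WeightedWeakTournament.scale (psi Y) (psi_pos Y) P.marg).verts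
      ⊆ (WeightedWeakTournament.scale (psi Y) (psi_pos Y) Q.marg).verts) :
    profileRepW Y m (WeightedWeakTournament.scale (psi Y) (psi_pos Y) P.marg) h1
      = (profileRepW Y m (WeightedWeakTournament.scale (psi Y) (psi_pos Y) Q.marg)
          h2).restrict
          (WeightedWeakTournament.scale (psi Y) (psi_pos Y) P.marg).verts hne hsub2 := by
  set TP := WeightedWeakTournament.scale (psi Y) (psi_pos Y) P.marg with hTP
  set TQ := WeightedWeakTournament.scale (psi Y) (psi_pos Y) Q.marg with hTQ
  have hmarg : ∀ x y, x ∈ P.cands → y ∈ P.cands → P.margin x y = Q.margin x y := by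
    intro x y hx hy
    conv_lhs => rw [hPQ]
    exact GAProfile.margin_restrict Q P.cands P.cands_nonempty hsub hx hy
  have hedge : ∀ x y, x ∈ TP.verts → y ∈ TP.verts → (TP.edge x y ↔ TQ.edge x y) := by
    intro x y hx hy
    show (0 < P.margin x y ∧ x ∈ P.cands ∧ y ∈ P.cands)
      ↔ (0 < Q.margin x y ∧ x ∈ Q.cands ∧ y ∈ Q.cands)
    constructor
    · rintro ⟨hmpos, hx', hy'⟩
      exact ⟨(hmarg x y hx' hy') ▸ hmpos, hsub hx', hsub hy'⟩
    · rintro ⟨hmpos, _, _⟩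
      refine ⟨?_, hx, hy⟩
      rw [hmarg x y hx hy]
      exact hmpos
  have hwt : ∀ x y, x ∈ TP.verts → y ∈ TP.verts → TQ.edge x y → TP.wt x y = TQ.wt x y := by
    intro x y hx hy he
    have he' : TP.edge x y := (hedge x y hx hy).mpr he
    have hP : (0 < P.margin x y ∧ x ∈ P.cands ∧ y ∈ P.cands) := he'
    have hQ : (0 < Q.margin x y ∧ x ∈ Q.cands ∧ y ∈ Q.cands) := he
    show psi Y * (if 0 < P.margin x y ∧ x ∈ P.cands ∧ y ∈ P.cands
        then P.margin x y else 0)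
      = psi Y * (if 0 < Q.margin x y ∧ x ∈ Q.cands ∧ y ∈ Q.cands
        then Q.margin x y else 0)
    rw [if_pos hP, if_pos hQ, hmarg x y hP.2.1 hP.2.2]
  have hkey := bigLW_restrict_eq Y m TQ TP h2 hsub2 hedge hwt
  show (bigLW Y m TP h1).restrict TP.verts TP.verts_nonempty h1
      = ((bigLW Y m TQ h2).restrict TQ.verts TQ.verts_nonempty h2).restrict
          TP.verts hne hsub2
  refine Eq.trans ?_ (GAProfile.restrict_restrict _ _ _ _ _ _ _).symm
  exact hkey

end Aux19

/-- Let `F` be an anonymous voting method satisfying a variable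
candidate universal axiom `Ax`. Then for any finite `Y ⊆ 𝒳` and `m ∈ ℤ⁺`, the
majoritarian projection `F_{maj,Y}` and the pairwise projection `F_{pair,Y,m}`
satisfy `Ax`. -/
theorem projections_preserve_variable_candidate_axioms (C : Type) [Infinite C]
    (F : AnonVotingMethod C) (n : ℕ) (Ax : Set (Fin n → GAProfile C × Finset C))
    (hAx : ∀ f ∈ Ax, ∀ i, (f i).2 ⊆ (f i).1.cands)
    (hVC : IsVariableCandidateAx Ax) (hsat : F.Satisfies Ax)
    (Y : Finset C) (m : ℕ) (hm : 0 < m) :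
    (majProj F Y).Satisfies Ax ∧ (pairProj F Y m).Satisfies Ax := by
  constructor
  · intro f hf
    have hdom : ∀ i, ((f i).1.IsAnon ∧ ∃ h : (f i).1.maj.verts ⊆ Y,
        profileRep Y (f i).1.maj h ∈ F.dom) := fun i => (hf i).1
    have hsubY : ∀ i, (f i).1.maj.verts ⊆ Y := fun i => ((hdom i).2).choose
    have hQdom : ∀ i, profileRep Y (f i).1.maj (hsubY i) ∈ F.dom :=
      fun i => ((hdom i).2).choose_spec
    have hwin : ∀ i, (f i).2 = F.winners (profileRep Y (f i).1.maj (hsubY i)) := by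
      intro i
      rw [(hf i).2]
      exact dif_pos (hsubY i)
    have hAxQ : (fun i => (profileRep Y (f i).1.maj (hsubY i), (f i).2)) ∈ Ax :=
      hsat _ (fun i => ⟨hQdom i, hwin i⟩)
    have hX : ∀ i, (f i).2 ⊆ (f i).1.cands := by
      intro i
      rw [hwin i]
      exact F.winners_sub _ (hQdom i)
    exact hVC (fun i => (f i).1) (fun i => profileRep Y (f i).1.maj (hsubY i))
      (fun i => rfl)
      (fun i j h1 hres h2 => profileRep_maj_restrict Y (f i).1 (f j).1 h1 hres
        (hsubY i) (hsubY j) (f i).1.cands_nonempty h2)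
      (fun i => (f i).2) hX hAxQ
  · intro f hf
    have hdom : ∀ i, ((f i).1.IsAnon ∧
        (∀ x ∈ (f i).1.cands, ∀ y ∈ (f i).1.cands, (f i).1.margin x y ≤ (m : ℤ)) ∧
        ∃ h : (WeightedWeakTournament.scale (psi Y) (psi_pos Y) (f i).1.marg).verts ⊆ Y,
          profileRepW Y m
            (WeightedWeakTournament.scale (psi Y) (psi_pos Y) (f i).1.marg) h ∈ F.dom) :=
      fun i => (hf i).1
    have hsubY : ∀ i,
        (WeightedWeakTournament.scale (psi Y) (psi_pos Y) (f i).1.marg).verts ⊆ Y :=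
      fun i => ((hdom i).2.2).choose
    have hQdom : ∀ i, profileRepW Y m
        (WeightedWeakTournament.scale (psi Y) (psi_pos Y) (f i).1.marg) (hsubY i)
          ∈ F.dom := fun i => ((hdom i).2.2).choose_spec
    have hwin : ∀ i, (f i).2 = F.winners (profileRepW Y m
        (WeightedWeakTournament.scale (psi Y) (psi_pos Y) (f i).1.marg) (hsubY i)) := by
      intro i
      rw [(hf i).2]
      exact dif_pos (hsubY i)
    have hAxQ : (fun i => (profileRepW Y m
        (WeightedWeakTournament.scale (psi Y) (psi_pos Y) (f i).1.marg) (hsubY i),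
          (f i).2)) ∈ Ax :=
      hsat _ (fun i => ⟨hQdom i, hwin i⟩)
    have hX : ∀ i, (f i).2 ⊆ (f i).1.cands := by
      intro i
      rw [hwin i]
      exact F.winners_sub _ (hQdom i)
    exact hVC (fun i => (f i).1)
      (fun i => profileRepW Y m
        (WeightedWeakTournament.scale (psi Y) (psi_pos Y) (f i).1.marg) (hsubY i))
      (fun i => rfl)
      (fun i j h1 hres h2 => profileRep_pair_restrict Y m (f i).1 (f j).1 h1 hres
        (hsubY i) (hsubY j) (f i).1.cands_nonempty h2)
      (fun i => (f i).2) hX hAxQ
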